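/- Let F : ℝ^p × ℝ^p → ℝ be a continuous function with F(s, σ) ≥ 0 for all s, σ and F(s, σ) = 0 if and only if s = σ. Let σ : Θ → ℝ^p be a continuous map on a topological space Θ, let σ° ∈ ℝ^p and θ° ∈ Θ with σ(θ°) ≠ σ°. Let (s_n) be a sequence of ℝ^p-valued random vectors with s_n → σ° in probability and (θ̂_n) a sequence of Θ-valued random elements with θ̂_n → θ° in probability. Then the test statistic T_n = n · F(s_n, σ(θ̂_n)) diverges to infinity in probability, i.e., for every M > 0, P(T_n > M) → 1. -/

import Mathlib

open MeasureTheory ProbabilityTheory Filter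

theorem stmt10 {Ω : Type*} [MeasurableSpace Ω] (P : Measure Ω) [IsProbabilityMeasure P]
    {p : ℕ} {Θ : Type*} [TopologicalSpace Θ]
    (F : (Fin p → ℝ) → (Fin p → ℝ) → ℝ)
    (hFcont : Continuous fun sσ : (Fin p → ℝ) × (Fin p → ℝ) => F sσ.1 sσ.2)
    (hFnonneg : ∀ s σ, 0 ≤ F s σ)
    (hFzero : ∀ s σ, F s σ = 0 ↔ s = σ)
    (σmap : Θ → (Fin p → ℝ)) (hσcont : Continuous σmap)
    (σ0 : Fin p → ℝ) (θ0 : Θ) (hMis : σmap θ0 ≠ σ0)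
    (s : ℕ → Ω → (Fin p → ℝ))
    (hs : ∀ ε > 0, Tendsto (fun n => P {ω | ε < ‖s n ω - σ0‖}) atTop (nhds 0))
    (θhat : ℕ → Ω → Θ)
    (hθ : ∀ U ∈ nhds θ0, Tendsto (fun n => P {ω | θhat n ω ∉ U}) atTop (nhds 0)) :
    ∀ M > (0 : ℝ),
      Tendsto (fun n : ℕ => P {ω | M < (n : ℝ) * F (s n ω) (σmap (θhat n ω))}) atTop
        (nhds 1) := by
  intro M hM
  have hne : σ0 ≠ σmap θ0 := fun h => hMis h.symm
  set c := F σ0 (σmap θ0) with hc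
  have hcpos : 0 < c :=
    lt_of_le_of_ne (hFnonneg _ _) (fun h => hne ((hFzero _ _).mp h.symm))
  have hG : Continuous fun q : (Fin p → ℝ) × Θ => F q.1 (σmap q.2) :=
    hFcont.comp (continuous_fst.prodMk ((hσcont.comp continuous_snd)))
  have hV : IsOpen {q : (Fin p → ℝ) × Θ | c / 2 < F q.1 (σmap q.2)} :=
    isOpen_lt continuous_const hG
  have hmem : (σ0, θ0) ∈ {q : (Fin p → ℝ) × Θ | c / 2 < F q.1 (σmap q.2)} := by
    exact half_lt_self hcpos
  obtain ⟨A, U, hA, hU, hσ0A, hθ0U, hAU⟩ := isOpen_prod_iff.mp hV σ0 θ0 hmem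
  obtain ⟨ε, hεpos, hball⟩ := Metric.isOpen_iff.mp hA σ0 hσ0A
  have hsε := hs (ε / 2) (by positivity)
  have hθU := hθ U (hU.mem_nhds hθ0U)
  set a : ℕ → ENNReal := fun n =>
    P {ω | ε / 2 < ‖s n ω - σ0‖} + P {ω | θhat n ω ∉ U} with ha
  have hsum : Tendsto a atTop (nhds 0) := by
    simpa using hsε.add hθU
  -- lower bound eventually
  have hNev : ∀ᶠ n : ℕ in atTop, M < (n : ℝ) * (c / 2) := by
    obtain ⟨N, hN⟩ := exists_nat_gt (M / (c / 2))
    filter_upwards [eventually_ge_atTop N] with n hn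
    have h1 : M / (c / 2) < (n : ℝ) := lt_of_lt_of_le hN (by exact_mod_cast hn)
    have := (div_lt_iff₀ (by positivity)).mp h1
    linarith
  have hlow : ∀ᶠ n : ℕ in atTop,
      1 - a n ≤ P {ω | M < (n : ℝ) * F (s n ω) (σmap (θhat n ω))} := by
    filter_upwards [hNev] with n hn
    have hsub : {ω | M < (n : ℝ) * F (s n ω) (σmap (θhat n ω))}ᶜ ⊆
        {ω | ε / 2 < ‖s n ω - σ0‖} ∪ {ω | θhat n ω ∉ U} := by
      intro ω hω
      by_contra hcontra
      simp only [Set.mem_union, Set.mem_setOf_eq, not_or, not_lt, not_not] at hcontra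
      obtain ⟨h1, h2⟩ := hcontra
      have hsA : s n ω ∈ A := hball (by
        simp only [Metric.mem_ball, dist_eq_norm]
        linarith)
      have hFgt : c / 2 < F (s n ω) (σmap (θhat n ω)) := hAU (Set.mk_mem_prod hsA h2)
      have : M < (n : ℝ) * F (s n ω) (σmap (θhat n ω)) := by
        calc M < (n : ℝ) * (c / 2) := hn
        _ ≤ (n : ℝ) * F (s n ω) (σmap (θhat n ω)) := by
            apply mul_le_mul_of_nonneg_left (le_of_lt hFgt) (Nat.cast_nonneg n)
      exact hω this
    have h1 : (1 : ENNReal) ≤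
        P {ω | M < (n : ℝ) * F (s n ω) (σmap (θhat n ω))} + a n := by
      have : (1 : ENNReal) = P Set.univ := (measure_univ (μ := P)).symm
      rw [this]
      calc P Set.univ ≤ P ({ω | M < (n : ℝ) * F (s n ω) (σmap (θhat n ω))} ∪
            ({ω | ε / 2 < ‖s n ω - σ0‖} ∪ {ω | θhat n ω ∉ U})) := by
            apply measure_mono
            intro ω _
            by_cases h : M < (n : ℝ) * F (s n ω) (σmap (θhat n ω))
            · exact Or.inl h
            · exact Or.inr (hsub h)
        _ ≤ P {ω | M < (n : ℝ) * F (s n ω) (σmap (θhat n ω))} +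
            P ({ω | ε / 2 < ‖s n ω - σ0‖} ∪ {ω | θhat n ω ∉ U}) := measure_union_le _ _
        _ ≤ _ := by
            gcongr
            exact measure_union_le _ _
    exact tsub_le_iff_right.mpr h1
  have hhigh : ∀ n : ℕ, P {ω | M < (n : ℝ) * F (s n ω) (σmap (θhat n ω))} ≤ 1 :=
    fun n => prob_le_one
  have hlowt : Tendsto (fun n => (1 : ENNReal) - a n) atTop (nhds 1) := by
    have := ENNReal.Tendsto.sub (tendsto_const_nhds (x := (1 : ENNReal))) hsum
      (Or.inl ENNReal.one_ne_top)
    simpa using this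
  exact tendsto_of_tendsto_of_tendsto_of_le_of_le' hlowt tendsto_const_nhds hlow
    (Eventually.of_forall hhigh)
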